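/- For every nonnegative integer n, the determinant of the n×n matrix with (i,j) entry 1/(2i+2j−1) (for 1 ≤ i,j ≤ n) equals (1/2^n) · Π_{i=1}^n ((i−1)!)² / (i+1/2)_n. -/

import Mathlib

open Finset Polynomial

private lemma poch_eval_prod (n : ℕ) (t : ℝ) :
    (ascPochhammer ℝ n).eval t = ∏ k ∈ range n, (t + k) := by
  induction n with
  | zero => simp
  | succ m ih => rw [ascPochhammer_succ_eval, prod_range_succ, ih]

private lemma prod_neg' {α : Type*} (s : Finset α) (f : α → ℝ) :
    (∏ a ∈ s, (-(f a))) = (-1 : ℝ) ^ s.card * ∏ a ∈ s, f a := by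
  rw [Finset.prod_congr rfl (fun a _ => (neg_one_mul (f a)).symm),
    Finset.prod_mul_distrib, Finset.prod_const]

private lemma prod_Ioc_sub_eq_factorial (a : ℕ) : ∀ b : ℕ,
    (∏ j ∈ Finset.Ioc a b, (j - a)) = (b - a).factorial := by
  intro b
  induction b with
  | zero => simp [Nat.Ioc_eq_range']
  | succ m ih =>
    rcases le_or_gt a m with h | h
    · rw [Finset.prod_Ioc_succ_top h, ih, Nat.succ_sub h, Nat.factorial_succ, mul_comm]
    · have h1 : m + 1 ≤ a := h
      rw [Finset.Ioc_eq_empty (by omega), Nat.sub_eq_zero_of_le h1]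
      simp

private lemma prod_range_sub_eq_factorial (j : ℕ) :
    (∏ l ∈ Finset.range j, ((j : ℝ) - l)) = j.factorial := by
  have : (∏ l ∈ Finset.range j, ((j : ℝ) - l)) = ((∏ l ∈ Finset.range j, (j - l) : ℕ) : ℝ) := by
    rw [Nat.cast_prod]
    exact Finset.prod_congr rfl fun l hl => by
      rw [Finset.mem_range] at hl
      rw [Nat.cast_sub hl.le]
  rw [this]
  congr 1
  rw [← Finset.prod_range_reflect, ← Finset.prod_range_add_one_eq_factorial]
  exact Finset.prod_congr rfl fun l hl => by rw [Finset.mem_range] at hl; omega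

private lemma prod_Ioi_fin_sub (n : ℕ) (i : Fin n) :
    (∏ j ∈ Finset.Ioi i, ((j : ℝ) - (i : ℝ))) = (n - 1 - (i : ℕ)).factorial := by
  have hmap : ∏ j ∈ Finset.Ioi i, ((j : ℝ) - (i : ℝ))
      = ∏ m ∈ Finset.Ioc (i : ℕ) (n - 1), ((m : ℝ) - (i : ℕ)) := by
    have hI : Finset.Ioc (i : ℕ) (n - 1) = Finset.Ioo (i : ℕ) n := by
      have := i.isLt
      ext m; simp only [Finset.mem_Ioc, Finset.mem_Ioo]; omega
    rw [hI, ← Fin.map_valEmbedding_Ioi, Finset.prod_map]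
    rfl
  rw [hmap]
  have : ∏ m ∈ Finset.Ioc (i : ℕ) (n - 1), ((m : ℝ) - (i : ℕ))
      = ((∏ m ∈ Finset.Ioc (i : ℕ) (n - 1), (m - (i : ℕ)) : ℕ) : ℝ) := by
    rw [Nat.cast_prod]
    exact Finset.prod_congr rfl fun m hm => by
      rw [Finset.mem_Ioc] at hm
      rw [Nat.cast_sub hm.1.le]
  rw [this, prod_Ioc_sub_eq_factorial]

private lemma prod_Iio_fin_sub (n : ℕ) (j : Fin n) :
    (∏ l ∈ Finset.Iio j, ((j : ℝ) - (l : ℝ))) = (j : ℕ).factorial := by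
  have hmap : ∏ l ∈ Finset.Iio j, ((j : ℝ) - (l : ℝ))
      = ∏ m ∈ Finset.Iio (j : ℕ), ((j : ℝ) - (m : ℕ)) := by
    rw [← Fin.map_valEmbedding_Iio, Finset.prod_map]
    rfl
  rw [hmap, Nat.Iio_eq_range, prod_range_sub_eq_factorial]

private noncomputable def PP (n : ℕ) (j : Fin n) : Polynomial ℝ :=
  ∏ k ∈ Finset.univ.erase j, (X + C ((k : ℝ) + 3/2))

private lemma PP_natDegree_lt (n : ℕ) (j : Fin n) : (PP n j).natDegree < n := by
  have h : (PP n j).natDegree = ∑ k ∈ Finset.univ.erase j, (X + C ((k : ℝ) + 3/2)).natDegree :=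
    Polynomial.natDegree_prod _ _ (fun k _ => X_add_C_ne_zero _)
  have hc : (Finset.univ.erase j).card = n - 1 := by
    rw [Finset.card_erase_of_mem (Finset.mem_univ j), Finset.card_univ, Fintype.card_fin]
  rw [h, Finset.sum_congr rfl (fun k _ => natDegree_X_add_C _), Finset.sum_const,
    smul_eq_mul, mul_one, hc]
  have := j.pos
  omega

private lemma PP_eval (n : ℕ) (j : Fin n) (t : ℝ) :
    (PP n j).eval t = ∏ k ∈ Finset.univ.erase j, (t + ((k : ℝ) + 3/2)) := by
  simp [PP, eval_prod]

/-- `det_{1≤i,j≤n} (1/(2i+2j−1)) = (1/2^n) Π_{i=1}^n ((i−1)!)² / (i+1/2)_n`. -/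
theorem det_cauchy0 (n : ℕ) :
    Matrix.det (Matrix.of (fun i j : Fin n =>
      (1 : ℝ) / (2 * ((i : ℕ) + 1 : ℝ) + 2 * ((j : ℕ) + 1 : ℝ) - 1)))
    = (1 / 2 ^ n) * ∏ i ∈ Finset.range n,
        ((Nat.factorial i : ℝ) ^ 2 /
          (ascPochhammer ℝ n).eval (((i : ℝ) + 1) + 1 / 2)) := by
  classical
  -- notation
  set Cm : Matrix (Fin n) (Fin n) ℝ :=
    Matrix.of (fun i j : Fin n => ((i : ℝ) + (j : ℝ) + 3/2)⁻¹) with hCm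
  set Am : Matrix (Fin n) (Fin n) ℝ :=
    Matrix.of (fun i j : Fin n => (PP n j).eval (i : ℝ)) with hAm
  set Bm : Matrix (Fin n) (Fin n) ℝ :=
    Matrix.of (fun k j : Fin n => (PP n j).coeff (k : ℕ)) with hBm
  set Vx : Matrix (Fin n) (Fin n) ℝ := Matrix.vandermonde (fun i : Fin n => (i : ℝ)) with hVx
  set Vm : Matrix (Fin n) (Fin n) ℝ :=
    Matrix.vandermonde (fun k : Fin n => -((k : ℝ) + 3/2)) with hVm
  set r : Fin n → ℝ := fun i => ∏ k : Fin n, ((i : ℝ) + (k : ℝ) + 3/2) with hr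
  set d : Fin n → ℝ := fun j => ∏ l ∈ Finset.univ.erase j, ((l : ℝ) - (j : ℝ)) with hd
  have hpos : ∀ i j : Fin n, (0 : ℝ) < (i : ℝ) + (j : ℝ) + 3/2 := by
    intro i j; positivity
  -- Vandermonde * coeff matrix = evaluation matrix
  have hVB : Vx * Bm = Am := by
    ext i j
    rw [Matrix.mul_apply]
    show (∑ k : Fin n, (i : ℝ) ^ (k : ℕ) * (PP n j).coeff (k : ℕ)) = (PP n j).eval (i : ℝ)
    rw [Polynomial.eval_eq_sum_range' (PP_natDegree_lt n j),
      ← Fin.sum_univ_eq_sum_range (fun m => (PP n j).coeff m * (i : ℝ) ^ m) n]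
    exact Finset.sum_congr rfl fun k _ => mul_comm _ _
  have hWB : Vm * Bm = Matrix.diagonal d := by
    ext k j
    rw [Matrix.mul_apply]
    have heval : (∑ l : Fin n, (-((k : ℝ) + 3/2)) ^ (l : ℕ) * (PP n j).coeff (l : ℕ))
        = (PP n j).eval (-((k : ℝ) + 3/2)) := by
      rw [Polynomial.eval_eq_sum_range' (PP_natDegree_lt n j),
        ← Fin.sum_univ_eq_sum_range (fun m => (PP n j).coeff m * (-((k : ℝ) + 3/2)) ^ m) n]
      exact Finset.sum_congr rfl fun l _ => mul_comm _ _
    show (∑ l : Fin n, (-((k : ℝ) + 3/2)) ^ (l : ℕ) * (PP n j).coeff (l : ℕ))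
        = Matrix.diagonal d k j
    rw [heval, PP_eval]
    by_cases hkj : k = j
    · subst hkj
      rw [Matrix.diagonal_apply_eq]
      exact Finset.prod_congr rfl fun l _ => by ring
    · rw [Matrix.diagonal_apply_ne _ hkj]
      refine Finset.prod_eq_zero (Finset.mem_erase.mpr ⟨hkj, Finset.mem_univ k⟩) ?_
      ring
  have hDC : Matrix.diagonal r * Cm = Am := by
    ext i j
    rw [Matrix.diagonal_mul]
    show r i * ((i : ℝ) + (j : ℝ) + 3/2)⁻¹ = (PP n j).eval (i : ℝ)
    rw [PP_eval]
    have hprod : r i = ((i : ℝ) + (j : ℝ) + 3/2) * ∏ k ∈ Finset.univ.erase j,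
        ((i : ℝ) + (k : ℝ) + 3/2) :=
      (Finset.mul_prod_erase Finset.univ (fun k : Fin n => (i : ℝ) + (k : ℝ) + 3/2)
        (Finset.mem_univ j)).symm
    rw [hprod, mul_comm ((i : ℝ) + (j : ℝ) + 3/2), mul_assoc,
      mul_inv_cancel₀ (hpos i j).ne', mul_one]
    exact Finset.prod_congr rfl fun k _ => by ring
  -- determinant relations
  have hdet1 : (Vm.det * ∏ i : Fin n, r i) * Cm.det = Vx.det * ∏ j : Fin n, d j := by
    have e1 : (∏ i : Fin n, r i) * Cm.det = Am.det := by
      rw [← Matrix.det_diagonal, ← Matrix.det_mul, hDC]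
    have e2 : Vx.det * Bm.det = Am.det := by rw [← Matrix.det_mul, hVB]
    have e3 : Vm.det * Bm.det = ∏ j : Fin n, d j := by
      rw [← Matrix.det_mul, hWB, Matrix.det_diagonal]
    calc (Vm.det * ∏ i : Fin n, r i) * Cm.det = Vm.det * ((∏ i : Fin n, r i) * Cm.det) := by ring
      _ = Vm.det * Am.det := by rw [e1]
      _ = Vm.det * (Vx.det * Bm.det) := by rw [e2]
      _ = Vx.det * (Vm.det * Bm.det) := by ring
      _ = Vx.det * ∏ j : Fin n, d j := by rw [e3]
  -- values
  have hVxval : Vx.det = ∏ i ∈ range n, ((n - 1 - i).factorial : ℝ) := by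
    rw [hVx, Matrix.det_vandermonde, ← Fin.prod_univ_eq_prod_range
      (fun i => ((n - 1 - i).factorial : ℝ)) n]
    exact Finset.prod_congr rfl fun i _ => prod_Ioi_fin_sub n i
  have hVmval : Vm.det = ∏ i ∈ range n, ((-1 : ℝ) ^ (n - 1 - i) * ((n - 1 - i).factorial : ℝ)) := by
    rw [hVm, Matrix.det_vandermonde, ← Fin.prod_univ_eq_prod_range
      (fun i => ((-1 : ℝ) ^ (n - 1 - i) * ((n - 1 - i).factorial : ℝ))) n]
    refine Finset.prod_congr rfl fun i _ => ?_
    have : ∀ j ∈ Finset.Ioi i, -((j : ℝ) + 3/2) - -((i : ℝ) + 3/2) = -(((j : ℝ) - (i : ℝ))) := by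
      intro j _; ring
    rw [Finset.prod_congr rfl this, prod_neg', Fin.card_Ioi, prod_Ioi_fin_sub]
  have hdval : ∀ j : Fin n, d j
      = (-1 : ℝ) ^ (j : ℕ) * ((j : ℕ).factorial : ℝ) * ((n - 1 - (j : ℕ)).factorial : ℝ) := by
    intro j
    have hsplit : Finset.univ.erase j = Finset.Iio j ∪ Finset.Ioi j := by
      ext l
      simp only [Finset.mem_erase, Finset.mem_univ, and_true, Finset.mem_union,
        Finset.mem_Iio, Finset.mem_Ioi]
      exact ⟨fun h => h.lt_or_gt, fun h => h.elim (fun h => h.ne) (fun h => h.ne')⟩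
    have hdisj : Disjoint (Finset.Iio j) (Finset.Ioi j) := by
      rw [Finset.disjoint_left]
      intro a ha hb
      rw [Finset.mem_Iio] at ha; rw [Finset.mem_Ioi] at hb
      exact absurd (ha.trans hb) (lt_irrefl _)
    show (∏ l ∈ Finset.univ.erase j, ((l : ℝ) - (j : ℝ)))
      = (-1 : ℝ) ^ (j : ℕ) * ((j : ℕ).factorial : ℝ) * ((n - 1 - (j : ℕ)).factorial : ℝ)
    rw [hsplit, Finset.prod_union hdisj]
    have h1 : ∏ l ∈ Finset.Iio j, ((l : ℝ) - (j : ℝ))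
        = (-1 : ℝ) ^ (j : ℕ) * ((j : ℕ).factorial : ℝ) := by
      have : ∀ l ∈ Finset.Iio j, ((l : ℝ) - (j : ℝ)) = -(((j : ℝ) - (l : ℝ))) := by
        intro l _; ring
      rw [Finset.prod_congr rfl this, prod_neg', Fin.card_Iio, prod_Iio_fin_sub]
    have h2 : ∏ l ∈ Finset.Ioi j, ((l : ℝ) - (j : ℝ)) = ((n - 1 - (j : ℕ)).factorial : ℝ) :=
      prod_Ioi_fin_sub n j
    rw [h1, h2]
  -- replace r by Pochhammer
  have hrval : ∀ i : Fin n, r i = (ascPochhammer ℝ n).eval ((i : ℝ) + 3/2) := by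
    intro i
    rw [hr, poch_eval_prod, ← Fin.prod_univ_eq_prod_range (fun k => ((i : ℝ) + 3/2 + k)) n]
    exact Finset.prod_congr rfl fun k _ => by ring
  set R : ℕ → ℝ := fun i => (ascPochhammer ℝ n).eval ((i : ℝ) + 3/2) with hR
  have hRpos : ∀ i : ℕ, 0 < R i := by
    intro i
    show (0 : ℝ) < (ascPochhammer ℝ n).eval ((i : ℝ) + 3/2)
    rw [poch_eval_prod]
    exact Finset.prod_pos fun k _ => by positivity
  have hrprod : (∏ i : Fin n, r i) = ∏ i ∈ range n, R i := by
    rw [Finset.prod_congr rfl (fun i _ => hrval i)]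
    exact Fin.prod_univ_eq_prod_range (fun i => (ascPochhammer ℝ n).eval ((i : ℝ) + 3/2)) n
  have hdprod : (∏ j : Fin n, d j) = ∏ j ∈ range n,
      ((-1 : ℝ) ^ j * (j.factorial : ℝ) * ((n - 1 - j).factorial : ℝ)) := by
    rw [Finset.prod_congr rfl (fun j _ => hdval j)]
    exact Fin.prod_univ_eq_prod_range
      (fun m => (-1 : ℝ) ^ m * (m.factorial : ℝ) * ((n - 1 - m).factorial : ℝ)) n
  -- key cancellation
  have hmain : (Vm.det * ∏ i : Fin n, r i) * (∏ i ∈ range n, ((i.factorial : ℝ)) ^ 2 / R i)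
      = Vx.det * ∏ j : Fin n, d j := by
    rw [hVmval, hVxval, hrprod, hdprod, Finset.prod_div_distrib]
    have hRne : (∏ i ∈ range n, R i) ≠ 0 := Finset.prod_ne_zero_iff.mpr fun i _ => (hRpos i).ne'
    rw [mul_assoc, mul_comm (∏ i ∈ range n, R i), div_mul_cancel₀ _ hRne]
    rw [Finset.prod_mul_distrib, Finset.prod_mul_distrib, Finset.prod_mul_distrib,
      Finset.prod_pow]
    have hGF : (∏ i ∈ range n, ((n - 1 - i).factorial : ℝ)) = ∏ i ∈ range n, (i.factorial : ℝ) :=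
      Finset.prod_range_reflect (fun i => ((Nat.factorial i : ℝ))) n
    have hsgn : (∏ i ∈ range n, ((-1 : ℝ) ^ (n - 1 - i))) = ∏ i ∈ range n, ((-1 : ℝ) ^ i) :=
      Finset.prod_range_reflect (fun i => ((-1 : ℝ) ^ i)) n
    rw [hGF, hsgn]
    ring
  -- conclude det Cm
  have hVmne : Vm.det ≠ 0 := by
    rw [hVm, Matrix.det_vandermonde_ne_zero_iff]
    intro a b hab
    have : (a : ℝ) = (b : ℝ) := by
      have := hab
      simp only [neg_inj, add_left_inj] at this
      exact this
    exact Fin.ext (Nat.cast_injective this)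
  have hrne : (∏ i : Fin n, r i) ≠ 0 := by
    rw [hrprod]
    exact Finset.prod_ne_zero_iff.mpr fun i _ => (hRpos i).ne'
  have hCdet : Cm.det = ∏ i ∈ range n, ((i.factorial : ℝ)) ^ 2 / R i :=
    mul_left_cancel₀ (mul_ne_zero hVmne hrne) (hdet1.trans hmain.symm)
  -- relate the original matrix with Cm
  have hM : Matrix.of (fun i j : Fin n =>
      (1 : ℝ) / (2 * ((i : ℕ) + 1 : ℝ) + 2 * ((j : ℕ) + 1 : ℝ) - 1)) = (2⁻¹ : ℝ) • Cm := by
    ext i j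
    show (1 : ℝ) / (2 * ((i : ℕ) + 1 : ℝ) + 2 * ((j : ℕ) + 1 : ℝ) - 1)
      = 2⁻¹ * ((i : ℝ) + (j : ℝ) + 3/2)⁻¹
    rw [one_div, ← mul_inv]
    congr 1
    ring
  rw [hM, Matrix.det_smul, Fintype.card_fin, hCdet]
  have : ((2 : ℝ)⁻¹) ^ n = 1 / 2 ^ n := by
    rw [inv_pow, one_div]
  rw [this]
  congr 1
  refine Finset.prod_congr rfl fun i _ => ?_
  have ht : ((i : ℝ) + 1) + 1/2 = (i : ℝ) + 3/2 := by ring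
  rw [ht]
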